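/- Let R be a differential ring of characteristic p > 0 (i.e., a commutative ring with unity equipped with a sequence of additive maps ∂^j satisfying ∂^0(a) = a, additivity, the Leibniz rule ∂^j(ab) = Σ_{i=0}^{j} ∂^i(a)∂^{j−i}(b), and the composition rule ∂^k(∂^j(a)) = C(k+j,j)∂^{k+j}(a)). If I ⊆ R is a ∂-ideal (an ideal with ∂^j(I) ⊆ I for all j ≥ 1), then the radical of I is also a ∂-ideal of R. -/

import Mathlib

/-- A differential ring structure (hyperdifferential operators) on a commutative ring:
a sequence of additive maps `D j` with `D 0 = id`, the higher Leibniz rule, and the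
composition rule `D k (D j a) = C(k+j,j) • D (k+j) a`. -/
structure HyperDiff (R : Type*) [CommRing R] where
  D : ℕ → R → R
  map_add : ∀ j a b, D j (a + b) = D j a + D j b
  d_zero : ∀ a, D 0 a = a
  leibniz : ∀ j a b, D j (a * b) = ∑ i ∈ Finset.range (j + 1), D i a * D (j - i) b
  comp : ∀ k j a, D k (D j a) = (k + j).choose j • D (k + j) a

/-- The truncated Taylor polynomial `∑_{m ≤ N} D m a · X^m`. -/
noncomputable def HyperDiff.poly {R : Type*} [CommRing R] (𝒟 : HyperDiff R) (a : R) (N : ℕ) :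
    Polynomial R :=
  ∑ m ∈ Finset.range (N + 1), Polynomial.C (𝒟.D m a) * Polynomial.X ^ m

lemma HyperDiff.coeff_poly {R : Type*} [CommRing R] (𝒟 : HyperDiff R) (a : R) (N m : ℕ)
    (hm : m ≤ N) : (𝒟.poly a N).coeff m = 𝒟.D m a := by
  simp [poly, Polynomial.coeff_X_pow, Finset.sum_ite_eq', Nat.lt_succ_iff, hm]

lemma HyperDiff.coeff_poly_pow {R : Type*} [CommRing R] (𝒟 : HyperDiff R) (a : R) (N : ℕ) :
    ∀ k, 1 ≤ k → ∀ m, m ≤ N → ((𝒟.poly a N) ^ k).coeff m = 𝒟.D m (a ^ k) := by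
  intro k hk
  induction k, hk using Nat.le_induction with
  | base => intro m hm; simpa using 𝒟.coeff_poly a N m hm
  | succ k hk ih =>
    intro m hm
    rw [pow_succ, Polynomial.coeff_mul,
      Finset.Nat.sum_antidiagonal_eq_sum_range_succ_mk, pow_succ, 𝒟.leibniz]
    refine Finset.sum_congr rfl fun i hi => ?_
    rw [Finset.mem_range, Nat.lt_succ_iff] at hi
    rw [ih i (hi.trans hm), 𝒟.coeff_poly a N (m - i) ((Nat.sub_le m i).trans hm)]

lemma HyperDiff.step {R : Type*} [CommRing R] (p : ℕ) [Fact p.Prime] [CharP R p]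
    (𝒟 : HyperDiff R) (a : R) (j : ℕ) : 𝒟.D (j * p) (a ^ p) = (𝒟.D j a) ^ p := by
  have hp : p.Prime := Fact.out
  have hp1 : 1 ≤ p := hp.one_lt.le
  have h := 𝒟.coeff_poly_pow a (j * p) p hp1 (j * p) le_rfl
  rw [← h, ← Polynomial.map_frobenius_expand p (𝒟.poly a (j * p)), Polynomial.coeff_map,
    Polynomial.coeff_expand hp.pos]
  simp only [Nat.mul_div_cancel _ hp.pos, dvd_mul_left, if_pos]
  rw [𝒟.coeff_poly a (j * p) j (Nat.le_mul_of_pos_right j hp.pos), frobenius_def]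

lemma HyperDiff.step_pow {R : Type*} [CommRing R] (p : ℕ) [Fact p.Prime] [CharP R p]
    (𝒟 : HyperDiff R) (a : R) (j e : ℕ) :
    𝒟.D (j * p ^ e) (a ^ p ^ e) = (𝒟.D j a) ^ p ^ e := by
  induction e with
  | zero => simp
  | succ e ih =>
    have : j * p ^ (e + 1) = (j * p ^ e) * p := by ring
    rw [this, pow_succ, pow_mul, 𝒟.step p (a ^ p ^ e) (j * p ^ e), ih, ← pow_mul, ← pow_succ]

/-- Let `R` be a differential ring of characteristic `p > 0`.
If `I ⊆ R` is a ∂-ideal (an ideal with `∂^j(I) ⊆ I` for all `j ≥ 1`),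
then the radical of `I` is also a ∂-ideal of `R`. -/
theorem radical_deltaIdeal {R : Type*} [CommRing R] (p : ℕ) [Fact p.Prime] [CharP R p]
    (𝒟 : HyperDiff R) (I : Ideal R)
    (hI : ∀ j, 1 ≤ j → ∀ a ∈ I, 𝒟.D j a ∈ I) :
    ∀ j, 1 ≤ j → ∀ a ∈ I.radical, 𝒟.D j a ∈ I.radical := by
  intro j hj a ha
  have hp : p.Prime := Fact.out
  obtain ⟨n, hn⟩ := ha
  -- `a ^ p ^ n` is in `I`, since `n ≤ p ^ n`.
  have hnp : n ≤ p ^ n := (Nat.lt_pow_self (n := n) hp.one_lt).le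
  have hmem : a ^ p ^ n ∈ I := by
    have : a ^ p ^ n = a ^ n * a ^ (p ^ n - n) := by
      rw [← pow_add, Nat.add_sub_cancel' hnp]
    rw [this]
    exact I.mul_mem_right _ hn
  refine ⟨p ^ n, ?_⟩
  rw [← 𝒟.step_pow p a j n]
  exact hI (j * p ^ n) (Nat.mul_pos hj (pow_pos hp.pos n)) _ hmem
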